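/- arXiv:2109.13417 — 4 statements merged into one kernel-verified Lean document; each statement's English description precedes it below -/
import Mathlib

section
/- Let q, p ∈ [0,1] and c ≥ 0. If kl(q‖p) ≤ c, then p ≤ (√(q + c/2) + √(c/2))². (In particular, a bound of the form kl(C_D(P)‖C_𝒟(P)) ≤ 2R implies the quadratic PAC-Bayes bound C_𝒟(P) ≤ (√(C_D(P)+R)+√R)².) -/
open scoped ENNReal

/-- Bernoulli Kullback–Leibler divergence `kl(q‖p)`, valued in `ℝ≥0∞`, with the
conventions `0·log 0 = 0` and `kl(q‖p) = ⊤` if (`q > 0` and `p = 0`) or (`q < 1` and `p = 1`). -/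
noncomputable def bklDiv (q p : ℝ) : ℝ≥0∞ :=
  if (0 < q ∧ p = 0) ∨ (q < 1 ∧ p = 1) then ⊤
  else ENNReal.ofReal (q * Real.log (q / p) + (1 - q) * Real.log ((1 - q) / (1 - p)))

/-- Key inequality: refined Pinsker bound `kl(q‖p) ≥ (p-q)²/(2p)` for `0 ≤ q < p < 1`. -/
lemma kl_key (p q : ℝ) (hp0 : 0 < p) (hp1 : p < 1) (hq0 : 0 ≤ q) (hqp : q < p) :
    (p - q) ^ 2 / (2 * p) ≤ q * Real.log (q / p) + (1 - q) * Real.log ((1 - q) / (1 - p)) := by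
  set g : ℝ → ℝ := fun x => x * Real.log x - x * Real.log p + (1 - x) * Real.log (1 - x)
      - (1 - x) * Real.log (1 - p) - (p - x) ^ 2 / (2 * p) with hg
  have h1 : Continuous fun x : ℝ => x * Real.log x := Real.continuous_mul_log
  have h2 : Continuous fun x : ℝ => (1 - x) * Real.log (1 - x) :=
    h1.comp (continuous_const.sub continuous_id)
  have hcont : Continuous g := by
    have h3 : Continuous fun x : ℝ => x * Real.log p := by fun_prop
    have h4 : Continuous fun x : ℝ => (1 - x) * Real.log (1 - p) := by fun_prop
    have h5 : Continuous fun x : ℝ => (p - x) ^ 2 / (2 * p) := by fun_prop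
    exact (((h1.sub h3).add h2).sub h4).sub h5
  have hderiv : ∀ x ∈ Set.Ioo (0 : ℝ) p, HasDerivAt g
      (Real.log x - Real.log p - Real.log (1 - x) + Real.log (1 - p) + (p - x) / p) x := by
    intro x hx
    obtain ⟨hx0, hxp⟩ := hx
    have hx1 : x < 1 := hxp.trans hp1
    have d1 : HasDerivAt (fun x : ℝ => x * Real.log x) (Real.log x + 1) x :=
      Real.hasDerivAt_mul_log hx0.ne'
    have d2 : HasDerivAt (fun x : ℝ => x * Real.log p) (Real.log p) x := by
      simpa using (hasDerivAt_id x).mul_const (Real.log p)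
    have d3' : HasDerivAt (fun y : ℝ => y * Real.log y) (Real.log (1 - x) + 1) (1 - x) :=
      Real.hasDerivAt_mul_log (by linarith)
    have dlin : HasDerivAt (fun x : ℝ => 1 - x) (-1) x := by
      simpa using (hasDerivAt_id' x).const_sub (1 : ℝ)
    have d3 : HasDerivAt (fun x : ℝ => (1 - x) * Real.log (1 - x))
        (-(Real.log (1 - x) + 1)) x := by
      have := d3'.comp x dlin
      simpa [mul_comm, Function.comp_def] using this
    have d4 : HasDerivAt (fun x : ℝ => (1 - x) * Real.log (1 - p)) (-Real.log (1 - p)) x := by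
      simpa using dlin.mul_const (Real.log (1 - p))
    have d5 : HasDerivAt (fun x : ℝ => (p - x) ^ 2 / (2 * p)) ((x - p) / p) x := by
      have dq : HasDerivAt (fun x : ℝ => p - x) (-1) x := by
        simpa using (hasDerivAt_id' x).const_sub p
      have := (dq.pow 2).div_const (2 * p)
      exact this.congr_deriv (by field_simp; ring)
    have := (((d1.sub d2).add d3).sub d4).sub d5
    exact this.congr_deriv (by ring)
  have hanti : AntitoneOn g (Set.Icc 0 p) := by
    apply antitoneOn_of_deriv_nonpos (convex_Icc 0 p) hcont.continuousOn
    · intro x hx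
      rw [interior_Icc] at hx
      exact (hderiv x hx).differentiableAt.differentiableWithinAt
    · intro x hx
      rw [interior_Icc] at hx
      rw [(hderiv x hx).deriv]
      obtain ⟨hx0, hxp⟩ := hx
      have hx1 : x < 1 := hxp.trans hp1
      have h1p : (0 : ℝ) < 1 - p := by linarith
      have h1x : (0 : ℝ) < 1 - x := by linarith
      have ht : (0 : ℝ) < x * (1 - p) / (p * (1 - x)) :=
        div_pos (mul_pos hx0 h1p) (mul_pos hp0 h1x)
      have hlog := Real.log_le_sub_one_of_pos ht
      have hlogt : Real.log (x * (1 - p) / (p * (1 - x)))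
          = Real.log x - Real.log p - Real.log (1 - x) + Real.log (1 - p) := by
        rw [Real.log_div (by positivity) (mul_pos hp0 h1x).ne', Real.log_mul hx0.ne'
          h1p.ne', Real.log_mul hp0.ne' h1x.ne']
        ring
      rw [hlogt] at hlog
      have hfrac : x * (1 - p) / (p * (1 - x)) - 1 ≤ (x - p) / p := by
        rw [div_sub_one (mul_pos hp0 h1x).ne', div_le_div_iff₀ (mul_pos hp0 h1x) hp0]
        nlinarith [mul_nonneg (mul_nonneg hx0.le hp0.le) (sub_nonneg.mpr hqp.le),
          mul_nonneg (mul_nonneg hx0.le hp0.le) (sub_nonneg.mpr hxp.le)]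
      have hend : (p - x) / p = -((x - p) / p) := by ring
      linarith
  have hgp : g p = 0 := by simp [hg]
  have hgq : 0 ≤ g q := by
    have := hanti ⟨hq0, le_of_lt hqp⟩ ⟨le_of_lt (hq0.trans_lt hqp), le_refl p⟩ hqp.le
    rw [hgp] at this
    exact this
  have hq1 : q < 1 := hqp.trans hp1
  rcases eq_or_lt_of_le hq0 with h0 | h0
  · subst h0
    simp only [hg] at hgq
    norm_num at hgq ⊢
    linarith [hgq]
  · have e1 : Real.log (q / p) = Real.log q - Real.log p :=
      Real.log_div h0.ne' hp0.ne'
    have e2 : Real.log ((1 - q) / (1 - p)) = Real.log (1 - q) - Real.log (1 - p) :=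
      Real.log_div (by linarith) (by linarith)
    simp only [hg] at hgq
    rw [e1, e2]
    nlinarith [hgq]

/-- Inverting the Bernoulli KL divergence: if `kl(q‖p) ≤ c` then
`p ≤ (√(q + c/2) + √(c/2))²`. -/
theorem kl_inv_quadratic_bound (q p c : ℝ)
    (hq : q ∈ Set.Icc (0 : ℝ) 1) (hp : p ∈ Set.Icc (0 : ℝ) 1) (hc : 0 ≤ c)
    (hkl : bklDiv q p ≤ ENNReal.ofReal c) :
    p ≤ (Real.sqrt (q + c / 2) + Real.sqrt (c / 2)) ^ 2 := by
  obtain ⟨hq0, hq1⟩ := hq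
  obtain ⟨hp0, hp1⟩ := hp
  set a := Real.sqrt (q + c / 2) with ha
  set b := Real.sqrt (c / 2) with hb
  have ha2 : a ^ 2 = q + c / 2 := Real.sq_sqrt (by linarith)
  have hb2 : b ^ 2 = c / 2 := Real.sq_sqrt (by linarith)
  have han : 0 ≤ a := Real.sqrt_nonneg _
  have hbn : 0 ≤ b := Real.sqrt_nonneg _
  rw [bklDiv] at hkl
  split_ifs at hkl with hcond
  · exact absurd (top_le_iff.mp hkl) (ENNReal.ofReal_ne_top)
  · push_neg at hcond
    rcases le_or_gt p q with hpq | hpq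
    · nlinarith [mul_nonneg han hbn]
    · -- q < p, so p > 0; show p < 1
      have hppos : 0 < p := hq0.trans_lt hpq
      have hplt1 : p < 1 := by
        rcases lt_or_eq_of_le hp1 with h | h
        · exact h
        · exfalso
          have := hcond.2 (by linarith : q < 1)
          exact this h
      have hK : q * Real.log (q / p) + (1 - q) * Real.log ((1 - q) / (1 - p)) ≤ c :=
        (ENNReal.ofReal_le_ofReal_iff hc).mp hkl
      have hkey := kl_key p q hppos hplt1 hq0 hpq
      have hmain : (p - q) ^ 2 / (2 * p) ≤ c := le_trans hkey hK
      have hsq : (p - q) ^ 2 ≤ 2 * p * c := by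
        rw [div_le_iff₀ (by positivity)] at hmain
        linarith
      nlinarith [mul_nonneg han hbn, sq_nonneg (2 * a * b - (p - q - c)), sq_nonneg (a * b)]
end

section
/- For all real numbers q, p with 0 ≤ q ≤ p < 1 and p > 0, the Bernoulli Kullback–Leibler divergence satisfies the refined Pinsker lower bound kl(q‖p) ≥ (p − q)²/(2p). -/
lemma self_le_sinh' {y : ℝ} (hy : 0 ≤ y) : y ≤ Real.sinh y := by
  have hmono : Monotone (fun y : ℝ => Real.sinh y - y) := by
    apply monotone_of_deriv_nonneg
    · exact (Real.differentiable_sinh.sub differentiable_id)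
    · intro x
      have : deriv (fun y : ℝ => Real.sinh y - y) x = Real.cosh x - 1 := by
        simp [deriv_sub, Real.differentiable_sinh.differentiableAt]
      rw [this]
      linarith [Real.one_le_cosh x]
  have := hmono hy
  simpa [Real.sinh_zero] using this



/-- Refined Pinsker inequality for the Bernoulli KL divergence: for `0 ≤ q ≤ p < 1`
with `p > 0`, one has `kl(q‖p) ≥ (p − q)²/(2p)`.  (In this regime the divergence is
given by the real formula `q·log(q/p) + (1−q)·log((1−q)/(1−p))`; note that for `q = 0`
the Lean conventions `log 0 = 0` correctly realize the convention `0·log 0 = 0`.) -/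
theorem bernoulli_kl_refined_pinsker (q p : ℝ)
    (hq0 : 0 ≤ q) (hqp : q ≤ p) (hp1 : p < 1) (hp0 : 0 < p) :
    (p - q) ^ 2 / (2 * p) ≤
      q * Real.log (q / p) + (1 - q) * Real.log ((1 - q) / (1 - p)) := by
  have hq1 : q < 1 := lt_of_le_of_lt hqp hp1
  -- Step A : (1-q) * log((1-q)/(1-p)) ≥ p - q
  have hA : p - q ≤ (1 - q) * Real.log ((1 - q) / (1 - p)) := by
    have hx : (0:ℝ) < (1 - q) / (1 - p) := div_pos (by linarith) (by linarith)
    have := Real.one_sub_inv_le_log_of_pos hx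
    have hinv : ((1 - q) / (1 - p))⁻¹ = (1 - p) / (1 - q) := by
      rw [inv_div]
    rw [hinv] at this
    have h1q : (0:ℝ) < 1 - q := by linarith
    have key : (1 - q) * (1 - (1 - p) / (1 - q)) ≤ (1 - q) * Real.log ((1 - q) / (1 - p)) :=
      mul_le_mul_of_nonneg_left this h1q.le
    have : (1 - q) * (1 - (1 - p) / (1 - q)) = p - q := by
      field_simp; ring
    linarith [key, this ▸ key]
  -- Step B : q * log(q/p) ≥ (q^2/p - p)/2
  have hB : (q ^ 2 / p - p) / 2 ≤ q * Real.log (q / p) := by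
    rcases eq_or_lt_of_le hq0 with h0 | h0
    · subst h0
      simp
      linarith
    · -- q > 0
      have hy : 0 ≤ Real.log (p / q) := by
        apply Real.log_nonneg
        rw [le_div_iff₀ h0]; linarith
      have hsinh := self_le_sinh' hy
      rw [Real.sinh_eq] at hsinh
      rw [Real.exp_log (by positivity), ← Real.log_inv, Real.exp_log (by positivity)] at hsinh
      have hinv : (p / q)⁻¹ = q / p := inv_div p q
      rw [hinv] at hsinh
      -- hsinh : log (p/q) ≤ (p/q - q/p)/2
      have hlog : Real.log (q / p) = - Real.log (p / q) := by
        rw [← Real.log_inv, inv_div]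
      have : (q / p - p / q) / 2 ≤ Real.log (q / p) := by
        rw [hlog]; linarith
      have key := mul_le_mul_of_nonneg_left this h0.le
      have heq : q * ((q / p - p / q) / 2) = (q ^ 2 / p - p) / 2 := by
        field_simp
      linarith [heq ▸ key]
  have hfinal : (p - q) ^ 2 / (2 * p) = (q ^ 2 / p - p) / 2 + (p - q) := by
    field_simp; ring
  linarith
end

section
/- (Donsker–Varadhan change of measure, as used in the proof of the PAC-Bayes bound.) Let Ω be a measurable space, let P and Q be probability measures on Ω, and let f : Ω → ℝ be a bounded measurable function. Then ∫ f dP ≤ KL(P‖Q) + log ∫ e^f dQ, where KL(P‖Q) ∈ [0,+∞] is the Kullback–Leibler divergence (the inequality holding trivially when KL(P‖Q) = +∞). -/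
open MeasureTheory Real
open scoped ENNReal Classical

/-- Kullback–Leibler divergence between two measures, valued in `ℝ≥0∞`. -/
noncomputable def klDiv' {α : Type*} [MeasurableSpace α] (P Q : Measure α) : ℝ≥0∞ :=
  if P ≪ Q ∧ Integrable (llr P Q) P then ENNReal.ofReal (∫ x, llr P Q x ∂P) else ⊤

lemma integral_llr_nonneg_aux {α : Type*} [MeasurableSpace α] (μ ν : Measure α)
    [IsProbabilityMeasure μ] [IsProbabilityMeasure ν]
    (h : μ ≪ ν) (hint : Integrable (llr μ ν) μ) : 0 ≤ ∫ x, llr μ ν x ∂μ := by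
  have h1 : ∫ x, - llr μ ν x ∂μ ≤ ∫ x, ((ν.rnDeriv μ x).toReal - 1) ∂μ := by
    refine integral_mono_ae hint.neg (Measure.integrable_toReal_rnDeriv.sub (integrable_const 1)) ?_
    filter_upwards [exp_neg_llr h] with x hx
    have := Real.add_one_le_exp (- llr μ ν x)
    have hx' : exp (- llr μ ν x) = (ν.rnDeriv μ x).toReal := hx
    linarith [hx' ▸ this]
  have h2 : ∫ x, ((ν.rnDeriv μ x).toReal - 1) ∂μ ≤ 0 := by
    rw [integral_sub Measure.integrable_toReal_rnDeriv (integrable_const 1)]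
    have h3 : ∫ x, (ν.rnDeriv μ x).toReal ∂μ ≤ (ν Set.univ).toReal := by
      rw [← setIntegral_univ]
      exact Measure.setIntegral_toReal_rnDeriv_le (measure_ne_top ν _)
    simp only [integral_const, measure_univ, probReal_univ, ENNReal.toReal_one, smul_eq_mul, one_mul]
    simp only [measure_univ, ENNReal.toReal_one] at h3
    linarith
  rw [integral_neg] at h1
  linarith

/-- Donsker–Varadhan change of measure: for probability measures `P, Q` and a bounded
measurable `f`, `∫ f dP ≤ KL(P‖Q) + log ∫ e^f dQ` (trivially when `KL(P‖Q) = ⊤`). -/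
theorem donsker_varadhan
    {Ω : Type*} [MeasurableSpace Ω]
    (P Q : Measure Ω) [IsProbabilityMeasure P] [IsProbabilityMeasure Q]
    (f : Ω → ℝ) (hf : Measurable f) (M : ℝ) (hbdd : ∀ x, |f x| ≤ M)
    (hKL : klDiv' P Q ≠ ⊤) :
    ∫ x, f x ∂P ≤ (klDiv' P Q).toReal + Real.log (∫ x, Real.exp (f x) ∂Q) := by
  by_cases h : P ≪ Q ∧ Integrable (llr P Q) P
  · obtain ⟨hac, hint⟩ := h
    have hfi : Integrable f P := by
      refine Integrable.mono' (integrable_const M) hf.aestronglyMeasurable ?_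
      exact Filter.Eventually.of_forall fun x ↦ hbdd x
    have hef : Integrable (fun x ↦ exp (f x)) Q := by
      refine Integrable.mono' (integrable_const (exp M)) (hf.exp).aestronglyMeasurable ?_
      refine Filter.Eventually.of_forall fun x ↦ ?_
      rw [Real.norm_eq_abs, abs_of_pos (exp_pos _)]
      exact exp_le_exp.mpr ((abs_le.mp (hbdd x)).2)
    haveI : IsProbabilityMeasure (Q.tilted f) := isProbabilityMeasure_tilted hef
    have hPQ' : P ≪ Q.tilted f := hac.trans (absolutelyContinuous_tilted hef)
    have h_int' : Integrable (llr P (Q.tilted f)) P :=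
      integrable_llr_tilted_right hac hfi hint hef
    have key : ∫ x, llr P (Q.tilted f) x ∂P
        = ∫ x, llr P Q x ∂P - ∫ x, f x ∂P + log (∫ x, exp (f x) ∂Q) :=
      integral_llr_tilted_right hac hfi hef hint
    have hnn : 0 ≤ ∫ x, llr P (Q.tilted f) x ∂P :=
      integral_llr_nonneg_aux P (Q.tilted f) hPQ' h_int'
    have hKLval : (klDiv' P Q).toReal = max (∫ x, llr P Q x ∂P) 0 := by
      rw [klDiv', if_pos ⟨hac, hint⟩, ENNReal.toReal_ofReal']
    have := le_max_left (∫ x, llr P Q x ∂P) 0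
    rw [hKLval]
    linarith
  · exact absurd (by rw [klDiv', if_neg h]) hKL
end

section
/- (Evolution-strategies gradient estimator with respect to the standard deviations.) Let C : ℝ^d → ℝ be a bounded measurable function and let μ ∈ ℝ^d. Define G on the open positive orthant {σ ∈ ℝ^d : σ_i > 0 for all i} by G(σ) = ∫_{ℝ^d} C(μ + σ ⊙ ε) dγ(ε). Then G is differentiable at every such σ, and for each coordinate i, ∂G/∂σ_i (σ) = (1/σ_i) ∫_{ℝ^d} C(μ + σ ⊙ ε)(ε_i² − 1) dγ(ε). -/
open MeasureTheory ProbabilityTheory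

/-- The standard Gaussian measure on `ℝ^d` (the `d`-fold product of `N(0,1)`). -/
noncomputable def stdGaussianPi (d : ℕ) : Measure (Fin d → ℝ) :=
  Measure.pi fun _ => gaussianReal 0 1

open Real Filter
open scoped ENNReal NNReal

namespace EsAux


theorem lintegral_pi_prod : ∀ (n : ℕ) (ν : Fin n → Measure ℝ), (∀ i, SigmaFinite (ν i)) →
    ∀ (f : Fin n → ℝ → ℝ≥0∞), (∀ i, Measurable (f i)) →
    ∫⁻ x, ∏ i, f i (x i) ∂Measure.pi ν = ∏ i, ∫⁻ y, f i y ∂(ν i) := by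
  intro n
  induction n with
  | zero =>
      intro ν _ f _
      simp [MeasureTheory.Measure.pi_of_empty]
  | succ n ih =>
      intro ν hν f hf
      have := ih (fun i => ν i.succ) (fun i => hν _) (fun i => f i.succ) (fun i => hf _)
      have A := (measurePreserving_piFinSuccAbove ν 0).symm
      rw [← A.lintegral_comp (f := fun x => ∏ i, f i (x i))
        (by exact Finset.measurable_prod _ fun i _ => (hf i).comp (measurable_pi_apply i))]
      simp_rw [MeasurableEquiv.piFinSuccAbove_symm_apply, Fin.insertNthEquiv,
        Equiv.coe_fn_mk, Fin.insertNth_zero, Fin.prod_univ_succ, Fin.cons_zero, Fin.cons_succ,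
        Fin.zero_succAbove, cast_eq]
      rw [lintegral_prod_mul (f := fun y => f 0 y) (g := fun x : Fin n → ℝ => ∏ i, f i.succ (x i))
        ((hf 0).aemeasurable)
        ((Finset.measurable_prod _ fun i _ => (hf i.succ).comp (measurable_pi_apply i)).aemeasurable),
        this]

theorem integrable_pi_prod {n : ℕ} {νm : Measure ℝ} [SigmaFinite νm] {f : Fin n → ℝ → ℝ}
    (hf : ∀ i, Integrable (f i) νm) :
    Integrable (fun x : Fin n → ℝ => ∏ i, f i (x i)) (Measure.pi fun _ => νm) := by
  letI : MeasureSpace ℝ := ⟨νm⟩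
  letI : SigmaFinite (volume : Measure ℝ) := by assumption
  exact MeasureTheory.Integrable.fin_nat_prod hf


/-- density ratio of `N(m, b²)` w.r.t. `N(m, a²)`. -/
noncomputable def ratio (a b m y : ℝ) : ℝ :=
  (a / b) * rexp ((y - m) ^ 2 / (2 * a ^ 2) - (y - m) ^ 2 / (2 * b ^ 2))

lemma ratio_nonneg {a b : ℝ} (ha : 0 ≤ a) (hb : 0 ≤ b) (m y : ℝ) : 0 ≤ ratio a b m y := by
  unfold ratio; positivity

lemma measurable_ratio (a b m : ℝ) : Measurable (ratio a b m) := by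
  unfold ratio; fun_prop

lemma pdf_mul_ratio {a b : ℝ} (ha : 0 < a) (hb : 0 < b) (m y : ℝ) :
    gaussianPDFReal m (NNReal.mk (a ^ 2) (sq_nonneg a)) y * ratio a b m y
      = gaussianPDFReal m (NNReal.mk (b ^ 2) (sq_nonneg b)) y := by
  have h2π : (0:ℝ) < Real.sqrt (2 * π) := Real.sqrt_pos.mpr (by positivity)
  unfold gaussianPDFReal ratio
  simp only [NNReal.coe_mk]
  rw [show (2 * π * a ^ 2) = (2 * π) * a ^ 2 by ring, show (2 * π * b ^ 2) = (2 * π) * b ^ 2 by ring,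
    Real.sqrt_mul (by positivity) (a ^ 2), Real.sqrt_mul (by positivity) (b ^ 2),
    Real.sqrt_sq ha.le, Real.sqrt_sq hb.le]
  rw [mul_mul_mul_comm, ← Real.exp_add]
  congr 1
  · field_simp
  · congr 1
    field_simp
    ring

lemma var_ne_zero {a : ℝ} (ha : 0 < a) : (NNReal.mk (a ^ 2) (sq_nonneg a) : ℝ≥0) ≠ 0 := by
  intro h
  exact (pow_pos ha 2).ne' (congrArg NNReal.toReal h)

lemma gaussianReal_withDensity_ratio {a b : ℝ} (ha : 0 < a) (hb : 0 < b) (m : ℝ) :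
    (gaussianReal m (NNReal.mk (a ^ 2) (sq_nonneg a))).withDensity
        (fun y => ENNReal.ofReal (ratio a b m y))
      = gaussianReal m (NNReal.mk (b ^ 2) (sq_nonneg b)) := by
  rw [gaussianReal_of_var_ne_zero m (var_ne_zero ha), gaussianReal_of_var_ne_zero m (var_ne_zero hb),
    ← withDensity_mul _ (measurable_gaussianPDF _ _) (measurable_ratio a b m).ennreal_ofReal]
  congr 1
  funext y
  simp only [Pi.mul_apply, gaussianPDF]
  rw [← ENNReal.ofReal_mul (gaussianPDFReal_nonneg _ _ _), pdf_mul_ratio ha hb]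



theorem pi_gaussian_withDensity {d : ℕ} (m σ s : Fin d → ℝ)
    (hσ : ∀ i, 0 < σ i) (hs : ∀ i, 0 < s i) :
    Measure.pi (fun i => gaussianReal (m i) (NNReal.mk ((s i) ^ 2) (sq_nonneg _)))
      = (Measure.pi (fun i => gaussianReal (m i) (NNReal.mk ((σ i) ^ 2) (sq_nonneg _)))).withDensity
          (fun x => ENNReal.ofReal (∏ i, ratio (σ i) (s i) (m i) (x i))) := by
  refine Measure.pi_eq fun t ht => ?_
  rw [withDensity_apply _ (MeasurableSet.univ_pi ht)]
  have hind : ∀ x : Fin d → ℝ,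
      (Set.univ.pi t).indicator
        (fun x => ENNReal.ofReal (∏ i, ratio (σ i) (s i) (m i) (x i))) x
      = ∏ i, (t i).indicator (fun y => ENNReal.ofReal (ratio (σ i) (s i) (m i) y)) (x i) := by
    intro x
    by_cases hx : x ∈ Set.univ.pi t
    · rw [Set.indicator_of_mem hx,
        ENNReal.ofReal_prod_of_nonneg (fun i _ => ratio_nonneg (hσ i).le (hs i).le _ _)]
      exact Finset.prod_congr rfl fun i _ =>
        (Set.indicator_of_mem (hx i (Set.mem_univ i)) (fun y => ENNReal.ofReal (ratio (σ i) (s i) (m i) y))).symm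
    · rw [Set.indicator_of_notMem hx]
      obtain ⟨j, hj⟩ := by simpa [Set.mem_pi] using hx
      exact (Finset.prod_eq_zero (Finset.mem_univ j)
        (Set.indicator_of_notMem hj _)).symm
  rw [← lintegral_indicator (MeasurableSet.univ_pi ht)]
  simp_rw [hind]
  rw [lintegral_pi_prod d _ (fun i => inferInstance) _
    (fun i => ((measurable_ratio _ _ _).ennreal_ofReal).indicator (ht i))]
  refine Finset.prod_congr rfl fun i _ => ?_
  rw [lintegral_indicator (ht i), ← withDensity_apply _ (ht i),
    gaussianReal_withDensity_ratio (hσ i) (hs i)]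


lemma coord_measurePreserving (m c : ℝ) :
    MeasurePreserving (fun x : ℝ => m + c * x) (gaussianReal 0 1)
      (gaussianReal m (NNReal.mk (c ^ 2) (sq_nonneg c))) := by
  constructor
  · fun_prop
  · have h1 : (fun x : ℝ => m + c * x) = (fun y => m + y) ∘ (fun x => c * x) := rfl
    rw [h1, ← Measure.map_map (by fun_prop) (by fun_prop), gaussianReal_map_const_mul c,
      gaussianReal_map_const_add m]
    simp

theorem map_affine_stdGaussianPi {d : ℕ} (m s : Fin d → ℝ) :
    Measure.map (fun ε : Fin d → ℝ => m + s * ε) (stdGaussianPi d)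
      = Measure.pi (fun i => gaussianReal (m i) (NNReal.mk ((s i) ^ 2) (sq_nonneg _))) := by
  have h := measurePreserving_pi (fun _ : Fin d => gaussianReal 0 1)
    (fun i => gaussianReal (m i) (NNReal.mk ((s i) ^ 2) (sq_nonneg _)))
    (fun i => coord_measurePreserving (m i) (s i))
  exact h.map_eq



/-- likelihood ratio in ε coordinates -/
noncomputable def qf (c t x : ℝ) : ℝ := (c / t) * rexp ((1 - (c / t) ^ 2) * x ^ 2 / 2)

lemma qf_nonneg {c t : ℝ} (hc : 0 ≤ c) (ht : 0 ≤ t) (x : ℝ) : 0 ≤ qf c t x := by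
  unfold qf; positivity

lemma qf_self {c : ℝ} (hc : c ≠ 0) (x : ℝ) : qf c c x = 1 := by
  unfold qf
  rw [div_self hc]
  norm_num

lemma ratio_affine {a b : ℝ} (ha : 0 < a) (hb : 0 < b) (m x : ℝ) :
    ratio a b m (m + a * x) = qf a b x := by
  unfold ratio qf
  congr 1
  congr 1
  field_simp
  ring

theorem integral_cov {d : ℕ} {C : (Fin d → ℝ) → ℝ} (hC : Measurable C) (m σ s : Fin d → ℝ)
    (hσ : ∀ i, 0 < σ i) (hs : ∀ i, 0 < s i) :
    ∫ ε, C (m + s * ε) ∂(stdGaussianPi d)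
      = ∫ ε, C (m + σ * ε) * ∏ i, qf (σ i) (s i) (ε i) ∂(stdGaussianPi d) := by
  have hmeas_aff : ∀ u : Fin d → ℝ, Measurable (fun ε : Fin d → ℝ => m + u * ε) := by
    intro u
    have : (fun ε : Fin d → ℝ => m + u * ε) = fun ε i => m i + u i * ε i := rfl
    rw [this]
    exact measurable_pi_iff.mpr fun i =>
      by fun_prop
  have hR : Measurable (fun x : Fin d → ℝ => ∏ i, ratio (σ i) (s i) (m i) (x i)) :=
    Finset.measurable_prod _ fun i _ => (measurable_ratio _ _ _).comp (measurable_pi_apply i)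
  have h1 : ∫ ε, C (m + s * ε) ∂(stdGaussianPi d)
      = ∫ x, C x ∂(Measure.pi (fun i => gaussianReal (m i) (NNReal.mk ((s i) ^ 2) (sq_nonneg _)))) := by
    rw [← map_affine_stdGaussianPi m s,
      integral_map (hmeas_aff s).aemeasurable hC.aestronglyMeasurable]
  have h2 : ∫ x, C x ∂(Measure.pi (fun i => gaussianReal (m i) (NNReal.mk ((s i) ^ 2) (sq_nonneg _))))
      = ∫ x, (∏ i, ratio (σ i) (s i) (m i) (x i)) * C x
          ∂(Measure.pi (fun i => gaussianReal (m i) (NNReal.mk ((σ i) ^ 2) (sq_nonneg _)))) := by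
    rw [pi_gaussian_withDensity m σ s hσ hs]
    have : (fun x : Fin d → ℝ => ENNReal.ofReal (∏ i, ratio (σ i) (s i) (m i) (x i)))
        = fun x => ((Real.toNNReal (∏ i, ratio (σ i) (s i) (m i) (x i)) : ℝ≥0) : ℝ≥0∞) := rfl
    rw [this, integral_withDensity_eq_integral_smul (by fun_prop) C]
    refine integral_congr_ae (ae_of_all _ fun x => ?_)
    show (∏ i, ratio (σ i) (s i) (m i) (x i)).toNNReal • C x
      = (∏ i, ratio (σ i) (s i) (m i) (x i)) * C x
    rw [NNReal.smul_def, smul_eq_mul, Real.coe_toNNReal _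
      (Finset.prod_nonneg fun i _ => ratio_nonneg (hσ i).le (hs i).le _ _)]
  have h3 : ∫ x, (∏ i, ratio (σ i) (s i) (m i) (x i)) * C x
          ∂(Measure.pi (fun i => gaussianReal (m i) (NNReal.mk ((σ i) ^ 2) (sq_nonneg _))))
      = ∫ ε, (∏ i, ratio (σ i) (s i) (m i) ((m + σ * ε) i)) * C (m + σ * ε)
          ∂(stdGaussianPi d) := by
    rw [← map_affine_stdGaussianPi m σ,
      integral_map (hmeas_aff σ).aemeasurable (by exact (hR.mul hC).aestronglyMeasurable)]
  rw [h1, h2, h3]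
  refine integral_congr_ae (ae_of_all _ fun ε => ?_)
  show (∏ i, ratio (σ i) (s i) (m i) ((m + σ * ε) i)) * C (m + σ * ε)
      = C (m + σ * ε) * ∏ i, qf (σ i) (s i) (ε i)
  rw [mul_comm]
  congr 1
  exact Finset.prod_congr rfl fun i _ => by
    have h : (m + σ * ε) i = m i + σ i * ε i := rfl
    rw [h, ratio_affine (hσ i) (hs i)]



noncomputable def qd (c t x : ℝ) : ℝ := qf c t x * (-(1 / t) + c ^ 2 * x ^ 2 / t ^ 3)

lemma hasDerivAt_qf (c x : ℝ) {t : ℝ} (ht : t ≠ 0) :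
    HasDerivAt (fun u => qf c u x) (qd c t x) t := by
  have h1 : HasDerivAt (fun u : ℝ => c / u) (-(c / t ^ 2)) t := by
    simpa [div_eq_mul_inv, mul_comm, neg_div] using (hasDerivAt_inv ht).const_mul c
  have h2 : HasDerivAt (fun u : ℝ => (1 - (c / u) ^ 2) * x ^ 2 / 2)
      (-(2 * (c / t) ^ 1 * -(c / t ^ 2)) * x ^ 2 / 2) t := by
    exact (((h1.pow 2).const_sub 1).mul_const (x ^ 2)).div_const 2
  have h3 := h1.mul h2.exp
  refine h3.congr_deriv ?_
  unfold qd qf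
  field_simp


lemma qd_self {c : ℝ} (hc : 0 < c) (x : ℝ) : qd c c x = (x ^ 2 - 1) / c := by
  unfold qd qf
  rw [div_self hc.ne']
  norm_num
  field_simp
  ring

section bounds
variable {c t : ℝ} (hc : 0 < c) (hcl : c / 2 ≤ t) (hcu : t ≤ 3 * c / 2)
include hc hcl hcu

lemma ht0 : 0 < t := lt_of_lt_of_le (by positivity) hcl

lemma qf_le (x : ℝ) : qf c t x ≤ 2 * rexp ((5 / 18) * x ^ 2) := by
  have ht : 0 < t := ht0 hc hcl hcu
  have hct : c / t ≤ 2 := by rw [div_le_iff₀ ht]; linarith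
  have hct2 : 2 / 3 ≤ c / t := by rw [le_div_iff₀ ht]; linarith
  have harg : (1 - (c / t) ^ 2) * x ^ 2 / 2 ≤ 5 / 18 * x ^ 2 := by
    nlinarith [sq_nonneg x, mul_nonneg (sq_nonneg x) (sub_nonneg.mpr
      (pow_le_pow_left₀ (by norm_num) hct2 2))]
  exact mul_le_mul hct (Real.exp_le_exp.mpr harg) (exp_nonneg _) (by norm_num)

lemma abs_qd_le (x : ℝ) :
    |qd c t x| ≤ 16 / c * (rexp ((5 / 18) * x ^ 2) * (1 + x ^ 2)) := by
  have ht : 0 < t := ht0 hc hcl hcu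
  have hqf := qf_le hc hcl hcu x
  have hqf0 : 0 ≤ qf c t x := qf_nonneg hc.le ht.le x
  have hA : |(-(1 / t) + c ^ 2 * x ^ 2 / t ^ 3)| ≤ 2 / c + 8 / c * x ^ 2 := by
    refine (abs_add_le _ _).trans ?_
    rw [abs_neg, abs_of_nonneg (by positivity : (0:ℝ) ≤ 1 / t),
      abs_of_nonneg (by positivity : (0:ℝ) ≤ c ^ 2 * x ^ 2 / t ^ 3)]
    have h1 : 1 / t ≤ 2 / c := by
      rw [div_le_div_iff₀ ht hc]; linarith
    have h2 : c ^ 2 * x ^ 2 / t ^ 3 ≤ 8 / c * x ^ 2 := by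
      have hct3 : c ≤ 2 * t := by linarith
      have h8 : c ^ 3 ≤ 8 * t ^ 3 := by
        calc c ^ 3 ≤ (2 * t) ^ 3 := pow_le_pow_left₀ hc.le hct3 3
          _ = 8 * t ^ 3 := by ring
      have hrw : 8 / c * x ^ 2 = 8 * x ^ 2 / c := by ring
      rw [hrw, div_le_div_iff₀ (by positivity) hc]
      nlinarith [mul_nonneg (sq_nonneg x) (sub_nonneg.mpr h8)]
    exact add_le_add h1 h2
  unfold qd
  rw [abs_mul, abs_of_nonneg hqf0]
  calc qf c t x * |(-(1 / t) + c ^ 2 * x ^ 2 / t ^ 3)|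
      ≤ (2 * rexp ((5 / 18) * x ^ 2)) * (2 / c + 8 / c * x ^ 2) :=
        mul_le_mul hqf hA (abs_nonneg _) (by positivity)
    _ = rexp ((5 / 18) * x ^ 2) * (4 / c + 16 / c * x ^ 2) := by ring
    _ ≤ rexp ((5 / 18) * x ^ 2) * (16 / c + 16 / c * x ^ 2) := by
        have h4 : (4:ℝ) / c ≤ 16 / c := by gcongr <;> norm_num
        exact mul_le_mul_of_nonneg_left (add_le_add_left h4 _) (exp_nonneg _)
    _ = 16 / c * (rexp ((5 / 18) * x ^ 2) * (1 + x ^ 2)) := by ring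

end bounds

lemma integrable_gauss_exp_poly :
    Integrable (fun x : ℝ => rexp ((5 / 18) * x ^ 2) * (1 + x ^ 2)) (gaussianReal 0 1) := by
  rw [gaussianReal_of_var_ne_zero 0 one_ne_zero,
    integrable_withDensity_iff (measurable_gaussianPDF 0 1)
      (ae_of_all _ fun x => ENNReal.ofReal_lt_top)]
  have hrw : (fun x : ℝ => rexp ((5 / 18) * x ^ 2) * (1 + x ^ 2) * (gaussianPDF 0 1 x).toReal)
      = fun x => rexp ((5 / 18) * x ^ 2) * (1 + x ^ 2)
          * ((Real.sqrt (2 * π))⁻¹ * rexp (-(x ^ 2) / 2)) := by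
    funext x
    rw [gaussianPDF, ENNReal.toReal_ofReal (gaussianPDFReal_nonneg _ _ _)]
    simp [gaussianPDFReal]
  rw [hrw]
  have c1 : Continuous fun x : ℝ => rexp ((5 / 18) * x ^ 2) :=
    Real.continuous_exp.comp (continuous_const.mul (continuous_pow 2))
  have c2 : Continuous fun x : ℝ => rexp (-(x ^ 2) / 2) :=
    Real.continuous_exp.comp ((continuous_pow 2).neg.div_const 2)
  have cbig : Continuous fun x : ℝ => rexp ((5 / 18) * x ^ 2) * (1 + x ^ 2)
      * ((Real.sqrt (2 * π))⁻¹ * rexp (-(x ^ 2) / 2)) :=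
    (c1.mul (continuous_const.add (continuous_pow 2))).mul (continuous_const.mul c2)
  refine Integrable.mono' (g := fun x => (Real.sqrt (2 * π))⁻¹ * 10 * rexp (-(1 / 9) * x ^ 2))
    (((integrable_exp_neg_mul_sq (by norm_num : (0:ℝ) < 1 / 9)).const_mul _))
    cbig.aestronglyMeasurable ?_
  refine ae_of_all _ fun x => ?_
  have h1 : 1 + x ^ 2 ≤ 10 * rexp (x ^ 2 / 9) := by
    nlinarith [add_one_le_exp (x ^ 2 / 9), exp_nonneg (x ^ 2 / 9)]
  have hexp : rexp ((5 / 18) * x ^ 2) * rexp (x ^ 2 / 9) * rexp (-(x ^ 2) / 2)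
      = rexp (-(1 / 9) * x ^ 2) := by
    rw [← Real.exp_add, ← Real.exp_add]; congr 1; ring
  rw [Real.norm_eq_abs, abs_of_nonneg (by positivity)]
  calc rexp ((5 / 18) * x ^ 2) * (1 + x ^ 2) * ((Real.sqrt (2 * π))⁻¹ * rexp (-(x ^ 2) / 2))
      ≤ rexp ((5 / 18) * x ^ 2) * (10 * rexp (x ^ 2 / 9))
          * ((Real.sqrt (2 * π))⁻¹ * rexp (-(x ^ 2) / 2)) := by
        refine mul_le_mul_of_nonneg_right (mul_le_mul_of_nonneg_left h1 (exp_nonneg _))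
          (by positivity)
    _ = (Real.sqrt (2 * π))⁻¹ * 10
          * (rexp ((5 / 18) * x ^ 2) * rexp (x ^ 2 / 9) * rexp (-(x ^ 2) / 2)) := by ring
    _ = (Real.sqrt (2 * π))⁻¹ * 10 * rexp (-(1 / 9) * x ^ 2) := by rw [hexp]

lemma integrable_gauss_exp :
    Integrable (fun x : ℝ => rexp ((5 / 18) * x ^ 2)) (gaussianReal 0 1) := by
  have c1 : Continuous fun x : ℝ => rexp ((5 / 18) * x ^ 2) :=
    Real.continuous_exp.comp (continuous_const.mul (continuous_pow 2))
  refine Integrable.mono' integrable_gauss_exp_poly c1.aestronglyMeasurable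
    (ae_of_all _ fun x => ?_)
  rw [Real.norm_eq_abs, abs_of_nonneg (exp_nonneg _)]
  nlinarith [exp_nonneg ((5 / 18) * x ^ 2), sq_nonneg x]


lemma continuous_qf (c t : ℝ) : Continuous fun x => qf c t x := by
  unfold qf
  exact continuous_const.mul (Real.continuous_exp.comp
    ((continuous_const.mul (continuous_pow 2)).div_const 2))

lemma continuous_qd (c t : ℝ) : Continuous fun x => qd c t x := by
  unfold qd
  exact (continuous_qf c t).mul (continuous_const.add
    ((continuous_const.mul (continuous_pow 2)).div_const _))




variable {d : ℕ}

noncomputable def Ffun (C : (Fin d → ℝ) → ℝ) (μ σ : Fin d → ℝ) (s ε : Fin d → ℝ) : ℝ :=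
  C (μ + σ * ε) * ∏ j, qf (σ j) (s j) (ε j)

noncomputable def Fder (C : (Fin d → ℝ) → ℝ) (μ σ : Fin d → ℝ) (s ε : Fin d → ℝ) :
    (Fin d → ℝ) →L[ℝ] ℝ :=
  C (μ + σ * ε) • ∑ i, (∏ j ∈ Finset.univ.erase i, qf (σ j) (s j) (ε j)) •
    ((qd (σ i) (s i) (ε i)) • ContinuousLinearMap.proj (R := ℝ) (φ := fun _ : Fin d => ℝ) i)

noncomputable def gfun (i j : Fin d) (x : ℝ) : ℝ :=
  (if j = i then 1 + x ^ 2 else 1) * (2 * rexp ((5 / 18) * x ^ 2))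

noncomputable def bfun (M : ℝ) (σ : Fin d → ℝ) (ε : Fin d → ℝ) : ℝ :=
  ∑ i, M * ((16 / σ i) * ∏ j, gfun i j (ε j))

lemma measurable_affine (μ σ : Fin d → ℝ) : Measurable fun ε : Fin d → ℝ => μ + σ * ε := by
  have : (fun ε : Fin d → ℝ => μ + σ * ε) = fun ε i => μ i + σ i * ε i := rfl
  rw [this]
  exact measurable_pi_iff.mpr fun i =>
    by fun_prop

lemma measurable_Ffun {C : (Fin d → ℝ) → ℝ} (hC : Measurable C) (μ σ s : Fin d → ℝ) :
    Measurable (Ffun C μ σ s) := by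
  refine (hC.comp (measurable_affine μ σ)).mul ?_
  exact Finset.measurable_prod _ fun j _ =>
    ((continuous_qf (σ j) (s j)).measurable).comp (measurable_pi_apply j)

lemma aestronglyMeasurable_Fder {C : (Fin d → ℝ) → ℝ} (hC : Measurable C) (μ σ s : Fin d → ℝ)
    (ν : Measure (Fin d → ℝ)) : AEStronglyMeasurable (Fder C μ σ s) ν := by
  have hrw : Fder C μ σ s = fun ε => ∑ i, (C (μ + σ * ε) * ((∏ j ∈ Finset.univ.erase i,
      qf (σ j) (s j) (ε j)) * qd (σ i) (s i) (ε i))) • ContinuousLinearMap.proj (R := ℝ)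
        (φ := fun _ : Fin d => ℝ) i := by
    funext ε
    unfold Fder
    rw [Finset.smul_sum]
    exact Finset.sum_congr rfl fun i _ => by rw [smul_smul, smul_smul, mul_assoc]
  rw [hrw]
  refine Finset.aestronglyMeasurable_fun_sum _ fun i _ => ?_
  refine AEStronglyMeasurable.smul_const ?_ _
  refine Measurable.aestronglyMeasurable ?_
  refine (hC.comp (measurable_affine μ σ)).mul ?_
  refine Measurable.mul ?_ (((continuous_qd (σ i) (s i)).measurable).comp
    (measurable_pi_apply i))
  exact Finset.measurable_prod _ fun j _ =>
    ((continuous_qf (σ j) (s j)).measurable).comp (measurable_pi_apply j)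

lemma norm_proj_le (i : Fin d) :
    ‖(ContinuousLinearMap.proj (R := ℝ) (φ := fun _ : Fin d => ℝ) i)‖ ≤ 1 :=
  ContinuousLinearMap.opNorm_le_bound _ zero_le_one fun x => by
    simpa using norm_le_pi_norm x i

lemma norm_Fder_le {C : (Fin d → ℝ) → ℝ} {M : ℝ} (hCbdd : ∀ x, |C x| ≤ M)
    (μ σ s : Fin d → ℝ) (hσ : ∀ i, 0 < σ i)
    (hsl : ∀ i, σ i / 2 ≤ s i) (hsu : ∀ i, s i ≤ 3 * σ i / 2) (ε : Fin d → ℝ) :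
    ‖Fder C μ σ s ε‖ ≤ bfun M σ ε := by
  have hM0 : 0 ≤ M := (abs_nonneg _).trans (hCbdd 0)
  have hspos : ∀ i, 0 < s i := fun i => lt_of_lt_of_le (by have := hσ i; linarith) (hsl i)
  have key_i : ∀ i : Fin d,
      ‖(∏ j ∈ Finset.univ.erase i, qf (σ j) (s j) (ε j)) •
        ((qd (σ i) (s i) (ε i)) • ContinuousLinearMap.proj (R := ℝ)
          (φ := fun _ : Fin d => ℝ) i)‖
        ≤ (16 / σ i) * ∏ j, gfun i j (ε j) := by
    intro i
    have hprod_le : ∏ j ∈ Finset.univ.erase i, qf (σ j) (s j) (ε j)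
        ≤ ∏ j ∈ Finset.univ.erase i, 2 * rexp ((5 / 18) * (ε j) ^ 2) :=
      Finset.prod_le_prod (fun j _ => qf_nonneg (hσ j).le (hspos j).le _)
        (fun j _ => qf_le (hσ j) (hsl j) (hsu j) (ε j))
    have hprod_nonneg : 0 ≤ ∏ j ∈ Finset.univ.erase i, qf (σ j) (s j) (ε j) :=
      Finset.prod_nonneg fun j _ => qf_nonneg (hσ j).le (hspos j).le _
    have hqd := abs_qd_le (hσ i) (hsl i) (hsu i) (ε i)
    have hgfun_eq : ∏ j, gfun i j (ε j)
        = ((1 + (ε i) ^ 2) * (2 * rexp ((5 / 18) * (ε i) ^ 2)))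
          * ∏ j ∈ Finset.univ.erase i, 2 * rexp ((5 / 18) * (ε j) ^ 2) := by
      rw [← Finset.mul_prod_erase Finset.univ _ (Finset.mem_univ i)]
      congr 1
      · simp [gfun]
      · exact Finset.prod_congr rfl fun j hj => by
          simp [gfun, Finset.ne_of_mem_erase hj]
    have h1 : ‖(qd (σ i) (s i) (ε i)) • ContinuousLinearMap.proj (R := ℝ)
        (φ := fun _ : Fin d => ℝ) i‖ ≤ |qd (σ i) (s i) (ε i)| * 1 := by
      refine (norm_smul_le (qd (σ i) (s i) (ε i)) (ContinuousLinearMap.proj (R := ℝ)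
        (φ := fun _ : Fin d => ℝ) i)).trans ?_
      rw [Real.norm_eq_abs]
      exact mul_le_mul_of_nonneg_left (norm_proj_le i) (abs_nonneg _)
    refine (norm_smul_le (∏ j ∈ Finset.univ.erase i, qf (σ j) (s j) (ε j))
      ((qd (σ i) (s i) (ε i)) • ContinuousLinearMap.proj (R := ℝ)
        (φ := fun _ : Fin d => ℝ) i)).trans ?_
    rw [Real.norm_eq_abs, abs_of_nonneg hprod_nonneg]
    calc (∏ j ∈ Finset.univ.erase i, qf (σ j) (s j) (ε j))
          * ‖(qd (σ i) (s i) (ε i)) • ContinuousLinearMap.proj (R := ℝ)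
              (φ := fun _ : Fin d => ℝ) i‖
        ≤ (∏ j ∈ Finset.univ.erase i, 2 * rexp ((5 / 18) * (ε j) ^ 2))
          * ((16 / σ i * (rexp ((5 / 18) * (ε i) ^ 2) * (1 + (ε i) ^ 2))) * 1) := by
          refine mul_le_mul hprod_le (h1.trans ?_) (norm_nonneg _)
            (Finset.prod_nonneg fun j _ => by positivity)
          exact mul_le_mul_of_nonneg_right hqd zero_le_one
      _ ≤ (∏ j ∈ Finset.univ.erase i, 2 * rexp ((5 / 18) * (ε j) ^ 2))
          * ((16 / σ i) * ((1 + (ε i) ^ 2) * (2 * rexp ((5 / 18) * (ε i) ^ 2)))) := by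
          refine mul_le_mul_of_nonneg_left ?_ (Finset.prod_nonneg fun j _ => by positivity)
          rw [mul_one]
          refine mul_le_mul_of_nonneg_left ?_ (div_nonneg (by norm_num) (hσ i).le)
          nlinarith [exp_nonneg ((5 / 18) * (ε i) ^ 2), sq_nonneg (ε i),
            mul_nonneg (exp_nonneg ((5 / 18) * (ε i) ^ 2)) (sq_nonneg (ε i))]
      _ = (16 / σ i) * ∏ j, gfun i j (ε j) := by rw [hgfun_eq]; ring
  unfold Fder bfun
  refine (norm_smul_le (C (μ + σ * ε)) (∑ i, (∏ j ∈ Finset.univ.erase i,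
    qf (σ j) (s j) (ε j)) • ((qd (σ i) (s i) (ε i)) • ContinuousLinearMap.proj (R := ℝ)
      (φ := fun _ : Fin d => ℝ) i))).trans ?_
  rw [Real.norm_eq_abs]
  calc |C (μ + σ * ε)| * ‖∑ i, (∏ j ∈ Finset.univ.erase i, qf (σ j) (s j) (ε j)) •
        ((qd (σ i) (s i) (ε i)) • ContinuousLinearMap.proj (R := ℝ)
          (φ := fun _ : Fin d => ℝ) i)‖
      ≤ M * ∑ i, (16 / σ i) * ∏ j, gfun i j (ε j) := by
        refine mul_le_mul (hCbdd _) ?_ (norm_nonneg _) hM0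
        exact (norm_sum_le _ _).trans (Finset.sum_le_sum fun i _ => key_i i)
    _ = ∑ i, M * ((16 / σ i) * ∏ j, gfun i j (ε j)) := by rw [Finset.mul_sum]

lemma integrable_bfun (M : ℝ) (σ : Fin d → ℝ) :
    Integrable (bfun M σ) (Measure.pi fun _ : Fin d => gaussianReal 0 1) := by
  unfold bfun
  refine integrable_finset_sum _ fun i _ => ?_
  refine Integrable.const_mul ?_ M
  refine Integrable.const_mul ?_ (16 / σ i)
  refine integrable_pi_prod fun j => ?_
  by_cases hji : j = i
  · have : gfun (d := d) i j = fun x => 2 * (rexp ((5 / 18) * x ^ 2) * (1 + x ^ 2)) := by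
      funext x; simp only [gfun, if_pos hji]; ring
    rw [this]
    exact integrable_gauss_exp_poly.const_mul 2
  · have : gfun (d := d) i j = fun x => 2 * rexp ((5 / 18) * x ^ 2) := by
      funext x; simp only [gfun, if_neg hji, one_mul]
    rw [this]
    exact integrable_gauss_exp.const_mul 2

lemma hasFDerivAt_Ffun (C : (Fin d → ℝ) → ℝ) (μ σ s : Fin d → ℝ) (hs : ∀ i, 0 < s i)
    (ε : Fin d → ℝ) : HasFDerivAt (fun u => Ffun C μ σ u ε) (Fder C μ σ s ε) s := by
  have hj : ∀ j ∈ Finset.univ, HasFDerivAt (fun u : Fin d → ℝ => qf (σ j) (u j) (ε j))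
      ((qd (σ j) (s j) (ε j)) • ContinuousLinearMap.proj (R := ℝ)
        (φ := fun _ : Fin d => ℝ) j) s := by
    intro j _
    have hp : HasFDerivAt (fun u : Fin d → ℝ => u j)
        (ContinuousLinearMap.proj (R := ℝ) (φ := fun _ : Fin d => ℝ) j) s :=
      (ContinuousLinearMap.proj (R := ℝ) (φ := fun _ : Fin d => ℝ) j).hasFDerivAt
    exact (hasDerivAt_qf (σ j) (ε j) (hs j).ne').comp_hasFDerivAt s hp
  exact (HasFDerivAt.finset_prod hj).const_mul (C (μ + σ * ε))

lemma Fder_apply_single (C : (Fin d → ℝ) → ℝ) (μ σ : Fin d → ℝ) (hσ : ∀ i, 0 < σ i)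
    (ε : Fin d → ℝ) (i : Fin d) :
    (Fder C μ σ σ ε) (Pi.single i 1)
      = (1 / σ i) * (C (μ + σ * ε) * ((ε i) ^ 2 - 1)) := by
  unfold Fder
  simp only [ContinuousLinearMap.smul_apply, ContinuousLinearMap.sum_apply,
    ContinuousLinearMap.proj_apply, smul_eq_mul]
  rw [Finset.sum_eq_single i]
  · rw [Finset.prod_congr rfl fun j (hj : j ∈ Finset.univ.erase i) =>
      qf_self (hσ j).ne' (ε j), Finset.prod_const_one, qd_self (hσ i),
      Pi.single_eq_same]
    ring
  · intro k _ hk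
    rw [Pi.single_eq_of_ne hk]
    simp
  · intro h
    exact (h (Finset.mem_univ i)).elim


end EsAux

open EsAux

/-- Evolution-strategies gradient estimator w.r.t. the standard deviations: if
`C : ℝ^d → ℝ` is bounded measurable, then `G(σ) = ∫ C(μ + σ ⊙ ε) dγ(ε)` is differentiable
at every `σ` in the open positive orthant, with
`∂G/∂σᵢ(σ) = (1/σᵢ) ∫ C(μ + σ ⊙ ε)(εᵢ² − 1) dγ(ε)`. -/
theorem es_gradient_stddev
    {d : ℕ} (C : (Fin d → ℝ) → ℝ) (hCmeas : Measurable C)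
    (M : ℝ) (hCbdd : ∀ x, |C x| ≤ M)
    (μ : Fin d → ℝ) :
    ∀ σ : Fin d → ℝ, (∀ i, 0 < σ i) →
      DifferentiableAt ℝ (fun s : Fin d → ℝ => ∫ ε, C (μ + s * ε) ∂(stdGaussianPi d)) σ ∧
      ∀ i : Fin d,
        fderiv ℝ (fun s : Fin d → ℝ => ∫ ε, C (μ + s * ε) ∂(stdGaussianPi d)) σ
            (Pi.single i 1) =
          (1 / σ i) * ∫ ε, C (μ + σ * ε) * ((ε i) ^ 2 - 1) ∂(stdGaussianPi d) := by
  intro σ hσ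
  haveI : IsProbabilityMeasure (stdGaussianPi d) := by
    unfold stdGaussianPi; infer_instance
  have hM0 : 0 ≤ M := (abs_nonneg _).trans (hCbdd 0)
  obtain ⟨δ, hδ0, hδ⟩ : ∃ δ > 0, ∀ i, δ ≤ σ i / 2 := by
    rcases isEmpty_or_nonempty (Fin d) with h | h
    · exact ⟨1, one_pos, fun i => (h.false i).elim⟩
    · refine ⟨(Finset.univ.inf' Finset.univ_nonempty fun i => σ i) / 2, ?_, fun i => ?_⟩
      · have : 0 < Finset.univ.inf' Finset.univ_nonempty fun i => σ i :=
          (Finset.lt_inf'_iff _).mpr fun i _ => hσ i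
        linarith
      · have := Finset.inf'_le (fun i => σ i) (Finset.mem_univ i)
        linarith
  have hball : ∀ s : Fin d → ℝ, s ∈ Metric.ball σ δ →
      ∀ i, σ i / 2 ≤ s i ∧ s i ≤ 3 * σ i / 2 := by
    intro s hs i
    have h1 : dist (s i) (σ i) ≤ dist s σ := dist_le_pi_dist s σ i
    have h2 : dist s σ < δ := Metric.mem_ball.mp hs
    have h3 : |s i - σ i| < δ := by rw [← Real.dist_eq]; exact lt_of_le_of_lt h1 h2
    have h4 := abs_sub_lt_iff.mp h3
    exact ⟨by linarith [hδ i, h4.2], by linarith [hδ i, h4.1]⟩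
  have hspos : ∀ s : Fin d → ℝ, s ∈ Metric.ball σ δ → ∀ i, 0 < s i :=
    fun s hs i => lt_of_lt_of_le (by have := hσ i; linarith) (hball s hs i).1
  have hFmeas : ∀ s : Fin d → ℝ, AEStronglyMeasurable (Ffun C μ σ s) (stdGaussianPi d) :=
    fun s => (measurable_Ffun hCmeas μ σ s).aestronglyMeasurable
  have hF_int : Integrable (Ffun C μ σ σ) (stdGaussianPi d) := by
    refine Integrable.mono' (integrable_const M) (hFmeas σ) (ae_of_all _ fun ε => ?_)
    rw [Real.norm_eq_abs]
    unfold Ffun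
    rw [Finset.prod_eq_one fun j _ => qf_self (hσ j).ne' (ε j), mul_one]
    exact hCbdd _
  have hbd : ∀ ε : Fin d → ℝ, ∀ s ∈ Metric.ball σ δ, ‖Fder C μ σ s ε‖ ≤ bfun M σ ε :=
    fun ε s hs => norm_Fder_le hCbdd μ σ s hσ
      (fun i => (hball s hs i).1) (fun i => (hball s hs i).2) ε
  have bound_int : Integrable (bfun M σ) (stdGaussianPi d) := integrable_bfun M σ
  have h_diff : ∀ᵐ ε ∂(stdGaussianPi d), ∀ s ∈ Metric.ball σ δ,
      HasFDerivAt (fun u => Ffun C μ σ u ε) (Fder C μ σ s ε) s :=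
    ae_of_all _ fun ε s hs => hasFDerivAt_Ffun C μ σ s (hspos s hs) ε
  have key : HasFDerivAt (fun s => ∫ ε, Ffun C μ σ s ε ∂(stdGaussianPi d))
      (∫ ε, Fder C μ σ σ ε ∂(stdGaussianPi d)) σ :=
    hasFDerivAt_integral_of_dominated_of_fderiv_le (Metric.ball_mem_nhds σ hδ0)
      (Filter.Eventually.of_forall hFmeas) hF_int
      (aestronglyMeasurable_Fder hCmeas μ σ σ _)
      (ae_of_all _ fun ε s hs => hbd ε s hs) bound_int h_diff
  have hEq : (fun s : Fin d → ℝ => ∫ ε, C (μ + s * ε) ∂(stdGaussianPi d))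
      =ᶠ[nhds σ] (fun s => ∫ ε, Ffun C μ σ s ε ∂(stdGaussianPi d)) := by
    have hO : ∀ᶠ s : Fin d → ℝ in nhds σ, ∀ i, 0 < s i :=
      Filter.eventually_all.mpr fun i =>
        (continuous_apply i).continuousAt.eventually (eventually_gt_nhds (hσ i))
    refine hO.mono fun s hs => ?_
    unfold Ffun
    exact integral_cov hCmeas μ σ s hσ hs
  have hG : HasFDerivAt (fun s : Fin d → ℝ => ∫ ε, C (μ + s * ε) ∂(stdGaussianPi d))
      (∫ ε, Fder C μ σ σ ε ∂(stdGaussianPi d)) σ := key.congr_of_eventuallyEq hEq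
  refine ⟨hG.differentiableAt, fun i => ?_⟩
  rw [hG.fderiv]
  have hF'_int : Integrable (Fder C μ σ σ) (stdGaussianPi d) :=
    Integrable.mono' bound_int (aestronglyMeasurable_Fder hCmeas μ σ σ _)
      (ae_of_all _ fun ε => hbd ε σ (Metric.mem_ball_self hδ0))
  rw [ContinuousLinearMap.integral_apply hF'_int]
  have hpt : ∀ ε : Fin d → ℝ, (Fder C μ σ σ ε) (Pi.single i 1)
      = (1 / σ i) * (C (μ + σ * ε) * ((ε i) ^ 2 - 1)) :=
    fun ε => Fder_apply_single C μ σ hσ ε i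
  rw [integral_congr_ae (ae_of_all _ hpt), integral_const_mul]
end
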